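/- arXiv:1802.03623 — 3 statements merged into one kernel-verified Lean document; each statement's English description precedes it below -/
import Mathlib

section
/- The function φ(d,m) = (d - (2q-1))^2 is a Lyapunov function for the planar vector field b = (b_d, b_m): for all (d,m) with -1 < d < 1 and 0 ≤ m ≤ 1 - d^2, one has ∇φ · b = -2(1-m-d^2)(1+d-2q)^2/((1-d)(1+d)) ≤ 0. -/
/-- φ(d,m) = (d-(2q-1))² is a Lyapunov function: ∇φ·b equals the stated
expression and is ≤ 0 on the region -1 < d < 1, 0 ≤ m ≤ 1 - d². -/
theorem stmt_1 (q d m : ℝ) (hq : 0 < q) (hq1 : q < 1)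
    (hd1 : -1 < d) (hd2 : d < 1) (hm0 : 0 ≤ m) (hm1 : m ≤ 1 - d^2) :
    (2 * (d - (2*q - 1))) * (-(1 - m - d^2) * (1 + d - 2*q) / ((1 + d) * (1 - d)))
      + 0 * (d * m * (1 + d - 2*q) / ((1 + d) * (1 - d)))
      = -2 * (1 - m - d^2) * (1 + d - 2*q)^2 / ((1 - d) * (1 + d)) ∧
    -2 * (1 - m - d^2) * (1 + d - 2*q)^2 / ((1 - d) * (1 + d)) ≤ 0 := by
  have h1 : (0:ℝ) < 1 + d := by linarith
  have h2 : (0:ℝ) < 1 - d := by linarith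
  constructor
  · field_simp
    ring
  · apply div_nonpos_of_nonpos_of_nonneg
    · nlinarith [sq_nonneg (1 + d - 2*q)]
    · positivity
end

section
/- The quantity C(d,m) = (-1 + 2m + d^2)/m^2 is a first integral of the drift flow: for -1 < d < 1, 0 < m, the directional derivative of C along the vector field (b_d, b_m) vanishes, i.e. (∂C/∂d)·b_d + (∂C/∂m)·b_m = 0, where ∂C/∂d = 2d/m^2 and ∂C/∂m = 2(1-d^2-m)/m^3. -/
/-- C(d,m) = (-1+2m+d²)/m² is a first integral of the drift flow. -/
theorem stmt_5 (q d m : ℝ) (hq : 0 < q) (hq1 : q < 1)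
    (hd1 : -1 < d) (hd2 : d < 1) (hm : 0 < m) :
    (2*d / m^2) * (-(1 - m - d^2) * (1 + d - 2*q) / ((1 + d) * (1 - d)))
      + (2*(1 - d^2 - m) / m^3) * (d * m * (1 + d - 2*q) / ((1 + d) * (1 - d)))
      = 0 := by
  have h1 : (1:ℝ) + d ≠ 0 := by linarith
  have h2 : (1:ℝ) - d ≠ 0 := by linarith
  have hm' : m ≠ 0 := ne_of_gt hm
  field_simp
  ring
end

section
/- The projection map to the stable line has zero derivative along the drift: with m*(d,m) = 4q(1-q)/(1 + √(1 - C(d,m)·4q(1-q))) where C(d,m) = (-1+2m+d^2)/m^2, one has (∂m*/∂d)·b_d + (∂m*/∂m)·b_m = 0 for all (d,m) with -1 < d < 1, 0 < m, provided 1 - 4q(1-q)·C(d,m) > 0 and 4q(1-q) ≠ m*(d,m). -/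
/-- The projection m* onto the stable line has zero derivative along the drift. -/
theorem stmt_6 (q d m : ℝ) (hq : 0 < q) (hq1 : q < 1)
    (hd1 : -1 < d) (hd2 : d < 1) (hm : 0 < m)
    (hpos : 1 - 4*q*(1-q) * ((-1 + 2*m + d^2) / m^2) > 0)
    (hne : 4*q*(1-q) ≠
      4*q*(1-q) / (1 + Real.sqrt (1 - 4*q*(1-q) * ((-1 + 2*m + d^2) / m^2)))) :
    deriv (fun x : ℝ =>
        4*q*(1-q) / (1 + Real.sqrt (1 - 4*q*(1-q) * ((-1 + 2*m + x^2) / m^2)))) d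
      * (-(1 - m - d^2) * (1 + d - 2*q) / ((1 + d) * (1 - d)))
    + deriv (fun x : ℝ =>
        4*q*(1-q) / (1 + Real.sqrt (1 - 4*q*(1-q) * ((-1 + 2*x + d^2) / x^2)))) m
      * (d * m * (1 + d - 2*q) / ((1 + d) * (1 - d)))
    = 0 := by
  set A := 4*q*(1-q) with hA
  have hm0 : m ≠ 0 := ne_of_gt hm
  have hm2 : (m:ℝ)^2 ≠ 0 := pow_ne_zero 2 hm0
  have hu : 1 - A * ((-1 + 2*m + d^2) / m^2) ≠ 0 := ne_of_gt hpos
  set s := Real.sqrt (1 - A * ((-1 + 2*m + d^2) / m^2)) with hs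
  have hspos : 0 < s := Real.sqrt_pos.mpr hpos
  have hs0 : s ≠ 0 := ne_of_gt hspos
  have h1s : (1:ℝ) + s ≠ 0 := by positivity
  -- first derivative (in d)
  have hud : HasDerivAt (fun x : ℝ => 1 - A * ((-1 + 2*m + x^2) / m^2))
      (-(A * (2*d) / m^2)) d := by
    have h1 : HasDerivAt (fun x : ℝ => x^2) (2*d) d := by
      simpa using hasDerivAt_pow 2 d
    have h2 : HasDerivAt (fun x : ℝ => (-1 + 2*m + x^2) / m^2) (2*d / m^2) d :=
      (h1.const_add (-1 + 2*m)).div_const (m^2)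
    have h3 := (h2.const_mul A).const_sub 1
    have he : -(A * (2*d) / m^2) = -(A * (2*d / m^2)) := by ring
    rw [he]
    exact h3
  have hsd : HasDerivAt (fun x : ℝ =>
      Real.sqrt (1 - A * ((-1 + 2*m + x^2) / m^2)))
      ((-(A * (2*d) / m^2)) / (2 * s)) d := hud.sqrt hu
  have hfd : HasDerivAt (fun x : ℝ =>
      A / (1 + Real.sqrt (1 - A * ((-1 + 2*m + x^2) / m^2))))
      ((0 * (1 + s) - A * ((-(A * (2*d) / m^2)) / (2 * s))) / (1 + s)^2) d :=
    (hasDerivAt_const d A).div (hsd.const_add 1) h1s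
  -- second derivative (in m)
  have hvm : HasDerivAt (fun x : ℝ => (-1 + 2*x + d^2) / x^2)
      ((2 * m^2 - (-1 + 2*m + d^2) * (2*m)) / (m^2)^2) m := by
    have hn : HasDerivAt (fun x : ℝ => -1 + 2*x + d^2) 2 m := by
      have : HasDerivAt (fun x : ℝ => x) 1 m := hasDerivAt_id m
      have h := ((this.const_mul 2).const_add (-1)).add_const (d^2)
      simpa using h
    have hden : HasDerivAt (fun x : ℝ => x^2) (2*m) m := by
      simpa using hasDerivAt_pow 2 m
    exact hn.div hden hm2
  have hum : HasDerivAt (fun x : ℝ => 1 - A * ((-1 + 2*x + d^2) / x^2))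
      (-(A * ((2 * m^2 - (-1 + 2*m + d^2) * (2*m)) / (m^2)^2))) m :=
    (hvm.const_mul A).const_sub 1
  have hsm : HasDerivAt (fun x : ℝ =>
      Real.sqrt (1 - A * ((-1 + 2*x + d^2) / x^2)))
      ((-(A * ((2 * m^2 - (-1 + 2*m + d^2) * (2*m)) / (m^2)^2))) / (2 * s)) m :=
    hum.sqrt hu
  have hfm : HasDerivAt (fun x : ℝ =>
      A / (1 + Real.sqrt (1 - A * ((-1 + 2*x + d^2) / x^2))))
      ((0 * (1 + s) - A * ((-(A * ((2 * m^2 - (-1 + 2*m + d^2) * (2*m)) / (m^2)^2))) / (2 * s))) / (1 + s)^2) m :=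
    (hasDerivAt_const m A).div (hsm.const_add 1) h1s
  rw [hfd.deriv, hfm.deriv]
  have hd1' : (1:ℝ) + d ≠ 0 := by linarith
  have hd2' : (1:ℝ) - d ≠ 0 := by linarith
  field_simp
  ring
end
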